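/- Suppose the clopen subsets of a topological space X form an open basis for its topology. Then X is compact if and only if every ultrafilter of CO(X) has at least one cluster point. -/

import Mathlib

open Set Topology BoundedContinuousFunction

/-- An ultrafilter of the Boolean algebra `CO(X)` of clopen subsets of `X`: a family of
clopen sets not containing `∅`, closed under binary intersections, upward closed (within
clopen sets), and containing `U` or `Uᶜ` for every clopen `U`. -/
structure ClopenUltrafilter (X : Type*) [TopologicalSpace X] where
  sets : Set (Set X)
  isClopen_of_mem : ∀ U ∈ sets, IsClopen U
  empty_not_mem : ∅ ∉ sets
  inter_mem : ∀ U ∈ sets, ∀ V ∈ sets, U ∩ V ∈ sets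
  mem_of_superset : ∀ U ∈ sets, ∀ V : Set X, IsClopen V → U ⊆ V → V ∈ sets
  mem_or_compl_mem : ∀ U : Set X, IsClopen U → U ∈ sets ∨ Uᶜ ∈ sets

/-- The topology on `UF(X)` with open basis the sets `{F : U ∈ F}` for `U` clopen. -/
instance (X : Type*) [TopologicalSpace X] : TopologicalSpace (ClopenUltrafilter X) :=
  TopologicalSpace.generateFrom
    {S | ∃ U : Set X, IsClopen U ∧ S = {F : ClopenUltrafilter X | U ∈ F.sets}}

/-- The principal ultrafilter of clopen sets at a point `x`. -/
def principalCU (X : Type*) [TopologicalSpace X] (x : X) : ClopenUltrafilter X where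
  sets := {U : Set X | IsClopen U ∧ x ∈ U}
  isClopen_of_mem := fun _ hU => hU.1
  empty_not_mem := fun h => Set.notMem_empty x h.2
  inter_mem := fun U hU V hV => ⟨hU.1.inter hV.1, hU.2, hV.2⟩
  mem_of_superset := fun U hU V hV hUV => ⟨hV, hUV hU.2⟩
  mem_or_compl_mem := fun U hU => by
    by_cases hx : x ∈ U
    · exact Or.inl ⟨hU, hx⟩
    · exact Or.inr ⟨hU.compl, hx⟩

/-- A cluster point of an ultrafilter of clopen sets: a point all of whose clopen
neighbourhoods belong to the ultrafilter. -/
def ClopenUltrafilter.IsClusterPoint {X : Type*} [TopologicalSpace X]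
    (F : ClopenUltrafilter X) (x : X) : Prop :=
  ∀ U : Set X, IsClopen U → x ∈ U → U ∈ F.sets

/-- If the clopen subsets of `X` form an open basis of its topology, then
`X` is compact if and only if every ultrafilter of `CO(X)` has at least one cluster point. -/
theorem compactSpace_iff_forall_clopenUltrafilter_exists_clusterPoint
    (X : Type*) [TopologicalSpace X]
    (hbasis : TopologicalSpace.IsTopologicalBasis {U : Set X | IsClopen U}) :
    CompactSpace X ↔ ∀ F : ClopenUltrafilter X, ∃ x : X, F.IsClusterPoint x := by
  constructor
  · intro hc F
    have huniv : (Set.univ : Set X) ∈ F.sets := by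
      rcases F.mem_or_compl_mem Set.univ isClopen_univ with h | h
      · exact h
      · simp at h; exact absurd h F.empty_not_mem
    have hfin : ∀ t : Finset F.sets, (⋂ i ∈ t, (i : Set X)) ∈ F.sets := by
      intro t
      classical
      induction t using Finset.induction with
      | empty => simpa using huniv
      | @insert a s hni ih =>
        rw [Finset.set_biInter_insert]
        exact F.inter_mem _ a.2 _ ih
    have hne : (⋂ i : F.sets, (i : Set X)).Nonempty := by
      by_contra h
      rw [Set.not_nonempty_iff_eq_empty] at h
      obtain ⟨t, ht⟩ := IsCompact.elim_finite_subfamily_closed (isCompact_univ (X := X))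
        (fun i : F.sets => (i : Set X))
        (fun i => (F.isClopen_of_mem _ i.2).isClosed)
        (by simpa using h)
      rw [Set.univ_inter] at ht
      exact F.empty_not_mem (ht ▸ hfin t)
    obtain ⟨x, hx⟩ := hne
    refine ⟨x, fun U hU hxU => ?_⟩
    rcases F.mem_or_compl_mem U hU with h | h
    · exact h
    · exact absurd hxU (Set.mem_iInter.mp hx ⟨Uᶜ, h⟩)
  · intro h
    rw [← isCompact_univ_iff, isCompact_iff_ultrafilter_le_nhds]
    intro f _
    set F : ClopenUltrafilter X :=
      { sets := {U : Set X | IsClopen U ∧ U ∈ f}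
        isClopen_of_mem := fun _ hU => hU.1
        empty_not_mem := fun h => f.toFilter.empty_notMem h.2
        inter_mem := fun U hU V hV => ⟨hU.1.inter hV.1, f.toFilter.inter_mem hU.2 hV.2⟩
        mem_of_superset := fun U hU V hV hUV => ⟨hV, f.toFilter.mem_of_superset hU.2 hUV⟩
        mem_or_compl_mem := fun U hU => by
          rcases f.mem_or_compl_mem U with h | h
          · exact Or.inl ⟨hU, h⟩
          · exact Or.inr ⟨hU.compl, h⟩ }
    obtain ⟨x, hx⟩ := h F
    refine ⟨x, Set.mem_univ x, fun s hs => ?_⟩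
    obtain ⟨U, hU, hxU, hUs⟩ := hbasis.mem_nhds_iff.mp hs
    exact f.toFilter.mem_of_superset (hx U hU hxU).2 hUs
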